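/- For every q ∈ ℝ⁴, every Γ ∈ ℝ and every t ∈ ℝ, the determinant of the matrix exponential satisfies det(exp(−Γ·t·J(q))) = exp(−Γ·t·‖q‖²); in particular det(exp(−Γ·t·J(q))) = exp(−Γ·t) when ‖q‖ = 1. -/

import Mathlib

noncomputable section
open Matrix
open scoped InnerProductSpace BigOperators

/-- `S₁ q = (−q₁, q₀, q₃, −q₂)`. -/
def S1 : Matrix (Fin 4) (Fin 4) ℝ := !![0,-1,0,0; 1,0,0,0; 0,0,0,1; 0,0,-1,0]
/-- `S₂ q = (−q₂, −q₃, q₀, q₁)`. -/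
def S2 : Matrix (Fin 4) (Fin 4) ℝ := !![0,0,-1,0; 0,0,0,-1; 1,0,0,0; 0,1,0,0]
/-- `S₃ q = (−q₃, q₂, −q₁, q₀)`. -/
def S3 : Matrix (Fin 4) (Fin 4) ℝ := !![0,0,0,-1; 0,0,1,0; 0,-1,0,0; 1,0,0,0]
/-- The family `S l`, `l = 1, 2, 3` (0-indexed). -/
def S : Fin 3 → Matrix (Fin 4) (Fin 4) ℝ := ![S1, S2, S3]

/-- `J(q) = (Σₗ (1/Iₗ) (Sₗ q)(Sₗ q)ᵀ) / (Σₗ 1/Iₗ)`. -/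
def Jmat (I : Fin 3 → ℝ) (q : Fin 4 → ℝ) : Matrix (Fin 4) (Fin 4) ℝ :=
  (∑ l : Fin 3, 1 / I l)⁻¹ • ∑ l : Fin 3, (1 / I l) • vecMulVec (S l *ᵥ q) (S l *ᵥ q)

/-- `M = 4 / (Σₗ 1/Iₗ)`. -/
def Mc (I : Fin 3 → ℝ) : ℝ := 4 / ∑ l : Fin 3, 1 / I l

/-- `λₗ = (1/Iₗ) / (Σₘ 1/Iₘ)`. -/
def lam (I : Fin 3 → ℝ) (l : Fin 3) : ℝ := (1 / I l) / ∑ m : Fin 3, 1 / I m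

/-- The conjugating matrix with columns `q, S₁q, S₂q, S₃q`. -/
def Pmat (q : Fin 4 → ℝ) : Matrix (Fin 4) (Fin 4) ℝ :=
  !![q 0, -q 1, -q 2, -q 3;
     q 1,  q 0, -q 3,  q 2;
     q 2,  q 3,  q 0, -q 1;
     q 3, -q 2,  q 1,  q 0]

set_option maxHeartbeats 1000000 in
lemma KP (a b c : ℝ) (q : Fin 4 → ℝ) :
    (a • vecMulVec ![-q 1, q 0, q 3, -q 2] ![-q 1, q 0, q 3, -q 2]
      + b • vecMulVec ![-q 2, -q 3, q 0, q 1] ![-q 2, -q 3, q 0, q 1]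
      + c • vecMulVec ![-q 3, q 2, -q 1, q 0] ![-q 3, q 2, -q 1, q 0]) * Pmat q
    = Pmat q * Matrix.diagonal ![0, a * (q 0 ^ 2 + q 1 ^ 2 + q 2 ^ 2 + q 3 ^ 2),
        b * (q 0 ^ 2 + q 1 ^ 2 + q 2 ^ 2 + q 3 ^ 2),
        c * (q 0 ^ 2 + q 1 ^ 2 + q 2 ^ 2 + q 3 ^ 2)] := by
  ext i j
  rw [Matrix.mul_apply, Matrix.mul_apply, Fin.sum_univ_four, Fin.sum_univ_four]
  fin_cases i <;> fin_cases j <;>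
    · simp [Pmat, Matrix.vecMulVec_apply, Matrix.diagonal]
      ring

set_option maxHeartbeats 1000000 in
lemma det_Pmat (q : Fin 4 → ℝ) :
    (Pmat q).det = (q 0 ^ 2 + q 1 ^ 2 + q 2 ^ 2 + q 3 ^ 2) ^ 2 := by
  simp [Pmat, Matrix.det_succ_row_zero, Fin.sum_univ_succ, Fin.succAbove,
    Fin.castSucc, Fin.castAdd, Fin.castLE]
  ring

lemma mulVec_S (q : Fin 4 → ℝ) :
    S 0 *ᵥ q = ![-q 1, q 0, q 3, -q 2] ∧ S 1 *ᵥ q = ![-q 2, -q 3, q 0, q 1] ∧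
      S 2 *ᵥ q = ![-q 3, q 2, -q 1, q 0] := by
  refine ⟨?_, ?_, ?_⟩ <;> (funext i; fin_cases i <;>
    simp [S, S1, S2, S3, Matrix.mulVec, dotProduct, Fin.sum_univ_four])

set_option maxHeartbeats 1000000 in
lemma key (I : Fin 3 → ℝ) (hI : ∀ l, 0 < I l) (q : Fin 4 → ℝ) (c : ℝ) :
    (NormedSpace.exp (c • Jmat I q)).det =
      Real.exp (c * (q 0 ^ 2 + q 1 ^ 2 + q 2 ^ 2 + q 3 ^ 2)) := by
  have h0 := hI 0
  have h1 := hI 1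
  have h2 := hI 2
  have hs : (0:ℝ) < ∑ l : Fin 3, 1 / I l := by
    rw [Fin.sum_univ_three]; positivity
  have hs' : (∑ l : Fin 3, 1 / I l) ≠ 0 := hs.ne'
  set r : ℝ := q 0 ^ 2 + q 1 ^ 2 + q 2 ^ 2 + q 3 ^ 2 with hrdef
  rcases eq_or_ne r 0 with hr | hr
  · have h0' : ∀ i, q i = 0 := by
      intro i
      have hq4 : q 0 = 0 ∧ q 1 = 0 ∧ q 2 = 0 ∧ q 3 = 0 := by
        refine ⟨?_, ?_, ?_, ?_⟩ <;> nlinarith [sq_nonneg (q 0), sq_nonneg (q 1),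
          sq_nonneg (q 2), sq_nonneg (q 3)]
      fin_cases i <;> simp [hq4.1, hq4.2.1, hq4.2.2.1, hq4.2.2.2]
    have hq : q = 0 := funext h0'
    have hvz : vecMulVec (0 : Fin 4 → ℝ) (0 : Fin 4 → ℝ) = 0 := by
      ext i j; simp [Matrix.vecMulVec_apply]
    have hJ : Jmat I q = 0 := by
      rw [Jmat, hq]
      simp [Matrix.mulVec_zero, hvz]
    rw [hJ, smul_zero, NormedSpace.exp_zero, Matrix.det_one, hr, mul_zero, Real.exp_zero]
  · have hr' : 0 < r := lt_of_le_of_ne (by positivity) (Ne.symm hr)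
    have hv := mulVec_S q
    -- diagonalization
    set s : ℝ := ∑ l : Fin 3, 1 / I l with hsdef
    set d : Fin 4 → ℝ := s⁻¹ • ![0, (1 / I 0) * r, (1 / I 1) * r, (1 / I 2) * r] with hddef
    have hsum3 : s = 1 / I 0 + 1 / I 1 + 1 / I 2 := by rw [hsdef, Fin.sum_univ_three]
    have hJP : Jmat I q * Pmat q = Pmat q * Matrix.diagonal d := by
      have hK := KP (1 / I 0) (1 / I 1) (1 / I 2) q
      rw [← hrdef] at hK
      rw [Jmat]
      simp only [Fin.sum_univ_three]
      rw [hv.1, hv.2.1, hv.2.2, ← hsum3, Matrix.smul_mul, hK, hddef, Matrix.diagonal_smul,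
        Matrix.mul_smul]
    have hUP : IsUnit (Pmat q).det := by
      rw [det_Pmat, ← hrdef]
      exact (by positivity : (0:ℝ) < r ^ 2).ne'.isUnit
    have hJ : Jmat I q = Pmat q * Matrix.diagonal d * (Pmat q)⁻¹ := by
      rw [← hJP, Matrix.mul_nonsing_inv_cancel_right _ _ hUP]
    have hconj : c • Jmat I q = Pmat q * Matrix.diagonal (c • d) * (Pmat q)⁻¹ := by
      simp only [hJ, hddef, Matrix.diagonal_smul, Matrix.mul_smul, Matrix.smul_mul, smul_smul]
    rw [hconj, Matrix.exp_conj (Pmat q) _ ((Matrix.isUnit_iff_isUnit_det _).mpr hUP),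
      Matrix.det_mul, Matrix.det_mul, Matrix.det_nonsing_inv,
      mul_comm, ← mul_assoc, Ring.inverse_mul_cancel _ hUP, one_mul,
      Matrix.exp_diagonal, Matrix.det_diagonal]
    have hentry : ∀ i, NormedSpace.exp (c • d) i = Real.exp (c * d i) := by
      intro i
      rw [Pi.coe_exp, ← Real.exp_eq_exp_ℝ, Pi.smul_apply, smul_eq_mul]
    rw [Fin.prod_univ_four, hentry 0, hentry 1, hentry 2, hentry 3,
      ← Real.exp_add, ← Real.exp_add, ← Real.exp_add]
    congr 1
    have hd : d 0 = 0 ∧ d 1 = s⁻¹ * ((1 / I 0) * r) ∧ d 2 = s⁻¹ * ((1 / I 1) * r) ∧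
        d 3 = s⁻¹ * ((1 / I 2) * r) := by
      refine ⟨?_, ?_, ?_, ?_⟩ <;> simp [hddef]
    have hs3 : 1 / I 0 + 1 / I 1 + 1 / I 2 ≠ 0 := hsum3 ▸ hs'
    have h0' := h0.ne'
    have h1' := h1.ne'
    have h2' := h2.ne'
    rw [hd.1, hd.2.1, hd.2.2.1, hd.2.2.2, hsum3]
    field_simp
    ring

/-- `det (exp (−Γ t J(q))) = exp (−Γ t ‖q‖²)`, and `= exp(−Γ t)` when `‖q‖ = 1`. -/
theorem stmt11 (I : Fin 3 → ℝ) (hI : ∀ l, 0 < I l) (q : EuclideanSpace ℝ (Fin 4)) (Γ t : ℝ) :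
    (NormedSpace.exp ((-(Γ * t)) • Jmat I q)).det = Real.exp (-(Γ * t) * ‖q‖ ^ 2) ∧
    (‖q‖ = 1 → (NormedSpace.exp ((-(Γ * t)) • Jmat I q)).det = Real.exp (-(Γ * t))) := by
  have hnorm : ‖q‖ ^ 2 = q 0 ^ 2 + q 1 ^ 2 + q 2 ^ 2 + q 3 ^ 2 := by
    rw [EuclideanSpace.norm_eq, Real.sq_sqrt (by positivity)]
    simp [Fin.sum_univ_four, Real.norm_eq_abs, sq_abs]
  have h1 : (NormedSpace.exp ((-(Γ * t)) • Jmat I q)).det = Real.exp (-(Γ * t) * ‖q‖ ^ 2) := by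
    rw [key I hI q (-(Γ * t)), hnorm]
  exact ⟨h1, fun hq => by rw [h1, hq, one_pow, mul_one]⟩
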